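/- Let R be a commutative ring. A 𝒬-torsion-free R-module M is a Lucas module if and only if Ext¹_R(T, M) = 0 for every 𝒬-torsion R-module T. -/

import Mathlib

open CategoryTheory

universe u

/-- An ideal is dense if its annihilator in `R` is zero. -/
def Ideal.IsDense {R : Type u} [CommRing R] (I : Ideal R) : Prop :=
  ∀ r : R, (∀ a ∈ I, a * r = 0) → r = 0

/-- An ideal is semi-regular if it contains a finitely generated dense subideal. -/
def Ideal.IsSemiRegular {R : Type u} [CommRing R] (I : Ideal R) : Prop :=
  ∃ J : Ideal R, J ≤ I ∧ J.FG ∧ J.IsDense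

/-- Membership in `𝒬`: finitely generated semi-regular ideals. -/
def Ideal.IsInQ {R : Type u} [CommRing R] (I : Ideal R) : Prop :=
  I.FG ∧ I.IsSemiRegular

/-- An `R`-module is `𝒬`-torsion if every element is annihilated by some `I ∈ 𝒬`. -/
def IsQTorsion (R : Type u) [CommRing R] (M : Type u) [AddCommGroup M] [Module R M] : Prop :=
  ∀ x : M, ∃ I : Ideal R, I.IsInQ ∧ ∀ a ∈ I, a • x = 0

/-- An `R`-module is `𝒬`-torsion-free if no nonzero element is annihilated by any `I ∈ 𝒬`. -/
def IsQTorsionFree (R : Type u) [CommRing R] (M : Type u) [AddCommGroup M] [Module R M] : Prop :=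
  ∀ x : M, (∃ I : Ideal R, I.IsInQ ∧ ∀ a ∈ I, a • x = 0) → x = 0

/-- `Ext¹_R(A, B) = 0`. -/
def Ext1Vanishes (R : Type u) [CommRing R] (A B : Type u) [AddCommGroup A] [Module R A]
    [AddCommGroup B] [Module R B] : Prop :=
  Subsingleton (((Ext R (ModuleCat.{u} R) 1).obj (Opposite.op (ModuleCat.of R A))).obj
    (ModuleCat.of R B))

/-- A Lucas module is a `𝒬`-torsion-free module `M` with `Ext¹_R(R/I, M) = 0` for all `I ∈ 𝒬`. -/
def IsLucasModule (R : Type u) [CommRing R] (M : Type u) [AddCommGroup M] [Module R M] : Prop :=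
  IsQTorsionFree R M ∧ ∀ I : Ideal R, I.IsInQ → Ext1Vanishes R (R ⧸ I) M

section Aux

variable {R : Type u} [CommRing R]


lemma ModuleCat.subsingleton_of_isZero' {X : ModuleCat R} (h : Limits.IsZero X) :
    Subsingleton X := by
  have h0 : (𝟙 X) = 0 := h.eq_of_src _ _
  constructor
  intro a b
  have ha : a = (𝟙 X) a := rfl
  have hb : b = (𝟙 X) b := rfl
  rw [ha, hb, h0]
  rfl

lemma ext1Vanishes_iff_lift (A M : Type u) [AddCommGroup A] [Module R A]
    [AddCommGroup M] [Module R M]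
    (P : ProjectiveResolution (ModuleCat.of R A)) :
    Ext1Vanishes R A M ↔
      ∀ φ : (P.complex.X 1 ⟶ ModuleCat.of R M), P.complex.d 2 1 ≫ φ = 0 →
        ∃ ψ : (P.complex.X 0 ⟶ ModuleCat.of R M), P.complex.d 1 0 ≫ ψ = φ := by
  set Mc := ModuleCat.of R M
  have e := (forget (ModuleCat R)).mapIso (P.isoExt 1 Mc)
  have h1 : Ext1Vanishes R A M ↔
      Subsingleton ((P.complex.linearYonedaObj R Mc).homology 1) := by
    constructor
    · intro h
      exact ⟨fun a b => e.symm.toEquiv.injective (@Subsingleton.elim _ h _ _)⟩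
    · intro h
      exact ⟨fun a b => e.toEquiv.injective (@Subsingleton.elim _ h _ _)⟩
  rw [h1]
  constructor
  · intro h
    have h2 : (P.complex.linearYonedaObj R Mc).ExactAt 1 := by
      rw [HomologicalComplex.exactAt_iff_isZero_homology]
      exact ModuleCat.isZero_of_subsingleton _
    rw [(P.complex.linearYonedaObj R Mc).exactAt_iff' 0 1 2 (by simp) (by simp)] at h2
    rw [ShortComplex.moduleCat_exact_iff] at h2
    intro φ hφ
    obtain ⟨ψ, hψ⟩ := h2 φ hφ
    exact ⟨ψ, hψ⟩
  · intro h
    have h2 : (P.complex.linearYonedaObj R Mc).ExactAt 1 := by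
      rw [(P.complex.linearYonedaObj R Mc).exactAt_iff' 0 1 2 (by simp) (by simp),
        ShortComplex.moduleCat_exact_iff]
      intro φ hφ
      obtain ⟨ψ, hψ⟩ := h φ hφ
      exact ⟨ψ, hψ⟩
    rw [HomologicalComplex.exactAt_iff_isZero_homology] at h2
    exact ModuleCat.subsingleton_of_isZero' h2

lemma transfer_iff {A F P₀ P₁ P₂ M : Type u}
    [AddCommGroup A] [Module R A] [AddCommGroup F] [Module R F]
    [AddCommGroup P₀] [Module R P₀] [AddCommGroup P₁] [Module R P₁]
    [AddCommGroup P₂] [Module R P₂] [AddCommGroup M] [Module R M]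
    [Module.Projective R F] [Module.Projective R P₀]
    (π : F →ₗ[R] A) (hπ : Function.Surjective π)
    (π₀ : P₀ →ₗ[R] A) (hπ₀ : Function.Surjective π₀)
    (d10 : P₁ →ₗ[R] P₀) (d21 : P₂ →ₗ[R] P₁)
    (h1 : ∀ x : P₀, π₀ x = 0 ↔ x ∈ LinearMap.range d10)
    (h2 : ∀ y : P₁, d10 y = 0 ↔ y ∈ LinearMap.range d21) :
    (∀ φ : P₁ →ₗ[R] M, φ ∘ₗ d21 = 0 → ∃ ψ : P₀ →ₗ[R] M, ψ ∘ₗ d10 = φ) ↔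
      (∀ φ : (LinearMap.ker π) →ₗ[R] M,
        ∃ ψ : F →ₗ[R] M, ∀ k : LinearMap.ker π, ψ k = φ k) := by
  obtain ⟨α, hα⟩ := Module.projective_lifting_property π₀ π hπ₀
  obtain ⟨β, hβ⟩ := Module.projective_lifting_property π π₀ hπ
  have hαa : ∀ x : F, π₀ (α x) = π x := fun x => LinearMap.congr_fun hα x
  have hβa : ∀ x : P₀, π (β x) = π₀ x := fun x => LinearMap.congr_fun hβ x
  constructor
  · intro hC φ
    have hker : ∀ y : P₁, (β ∘ₗ d10) y ∈ LinearMap.ker π := by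
      intro y
      simp only [LinearMap.mem_ker, LinearMap.comp_apply, hβa]
      exact (h1 _).mpr ⟨y, rfl⟩
    set μ : P₁ →ₗ[R] M := φ ∘ₗ LinearMap.codRestrict (LinearMap.ker π) (β ∘ₗ d10) hker with hμdef
    have hμ : μ ∘ₗ d21 = 0 := by
      ext z
      have hz : d10 (d21 z) = 0 := (h2 _).mpr ⟨z, rfl⟩
      have : LinearMap.codRestrict (LinearMap.ker π) (β ∘ₗ d10) hker (d21 z) = 0 := by
        apply Subtype.ext
        simp [hz]
      simp [hμdef, this]
    obtain ⟨ψ₀, hψ₀⟩ := hC μ hμ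
    have hψ₀a : ∀ y : P₁, ψ₀ (d10 y) = μ y := fun y => LinearMap.congr_fun hψ₀ y
    have hsub : ∀ x : F, ((LinearMap.id : F →ₗ[R] F) - β ∘ₗ α) x ∈ LinearMap.ker π := by
      intro x
      simp [LinearMap.mem_ker, map_sub, hβa, hαa]
    refine ⟨φ ∘ₗ LinearMap.codRestrict (LinearMap.ker π) ((LinearMap.id : F →ₗ[R] F) - β ∘ₗ α) hsub
        + ψ₀ ∘ₗ α, ?_⟩
    intro k
    have hk : π₀ (α ↑k) = 0 := by rw [hαa]; exact k.2
    obtain ⟨y, hy⟩ := (h1 _).mp hk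
    have e1 : ψ₀ (α ↑k) = φ ⟨β (α ↑k), by
        simp only [LinearMap.mem_ker, hβa, hk]⟩ := by
      calc ψ₀ (α ↑k) = ψ₀ (d10 y) := by rw [hy]
        _ = μ y := hψ₀a y
        _ = φ ⟨β (d10 y), hker y⟩ := rfl
        _ = _ := by congr 1; exact Subtype.ext (show β (d10 y) = β (α ↑k) from by rw [hy])
    simp only [LinearMap.add_apply, LinearMap.comp_apply, e1]
    rw [← map_add]
    congr 1
    apply Subtype.ext
    simp [LinearMap.codRestrict]
  · intro hE φ hφ
    have hvanish : ∀ y : P₁, d10 y = 0 → φ y = 0 := by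
      intro y hy
      obtain ⟨z, rfl⟩ := (h2 _).mp hy
      exact LinearMap.congr_fun hφ z
    have hle : LinearMap.ker d10 ≤ LinearMap.ker φ := fun y hy => hvanish y hy
    set φ₂ : (LinearMap.range d10) →ₗ[R] M :=
      (Submodule.liftQ (LinearMap.ker d10) φ hle) ∘ₗ
        (d10.quotKerEquivRange.symm : (LinearMap.range d10) →ₗ[R] P₁ ⧸ LinearMap.ker d10)
      with hφ₂def
    have hφ₂ : ∀ y : P₁, φ₂ ⟨d10 y, ⟨y, rfl⟩⟩ = φ y := by
      intro y
      have he : d10.quotKerEquivRange.symm ⟨d10 y, ⟨y, rfl⟩⟩ = Submodule.Quotient.mk y := by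
        rw [LinearEquiv.symm_apply_eq]
        exact Subtype.ext (d10.quotKerEquivRange_apply_mk y)
      simp [hφ₂def, he]
    have hαk : ∀ k : LinearMap.ker π, (α ∘ₗ (LinearMap.ker π).subtype) k ∈ LinearMap.range d10 := by
      intro k
      refine (h1 _).mp ?_
      simp only [LinearMap.comp_apply, Submodule.coe_subtype, hαa]
      exact k.2
    obtain ⟨ψF, hψF⟩ := hE (φ₂ ∘ₗ LinearMap.codRestrict (LinearMap.range d10)
      (α ∘ₗ (LinearMap.ker π).subtype) hαk)
    have hxm : ∀ x : P₀, ((LinearMap.id : P₀ →ₗ[R] P₀) - α ∘ₗ β) x ∈ LinearMap.range d10 := by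
      intro x
      refine (h1 _).mp ?_
      simp [map_sub, hαa, hβa]
    refine ⟨φ₂ ∘ₗ LinearMap.codRestrict (LinearMap.range d10) ((LinearMap.id : P₀ →ₗ[R] P₀) - α ∘ₗ β) hxm
        + ψF ∘ₗ β, ?_⟩
    ext y
    have hβy : β (d10 y) ∈ LinearMap.ker π := by
      simp only [LinearMap.mem_ker, hβa]
      exact (h1 _).mpr ⟨y, rfl⟩
    have e1 : ψF (β (d10 y)) = φ₂ ⟨α (β (d10 y)), (h1 _).mp (by rw [hαa, hβa]; exact ((h1 _).mpr ⟨y, rfl⟩))⟩ := by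
      have := hψF ⟨β (d10 y), hβy⟩
      rw [this]
      simp only [LinearMap.comp_apply, LinearMap.codRestrict]
      congr 1
    simp only [LinearMap.add_apply, LinearMap.comp_apply, e1]
    rw [← hφ₂ y, ← map_add]
    congr 1
    apply Subtype.ext
    simp [LinearMap.codRestrict]
lemma ext1Vanishes_iff_extend (A M F : Type u) [AddCommGroup A] [Module R A]
    [AddCommGroup M] [Module R M] [AddCommGroup F] [Module R F] [Module.Projective R F]
    (π : F →ₗ[R] A) (hπ : Function.Surjective π) :
    Ext1Vanishes R A M ↔
      ∀ φ : (LinearMap.ker π) →ₗ[R] M, ∃ ψ : F →ₗ[R] M, ∀ k : LinearMap.ker π, ψ k = φ k := by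
  let P : ProjectiveResolution (ModuleCat.of R A) :=
    CategoryTheory.projectiveResolution (ModuleCat.of R A)
  rw [ext1Vanishes_iff_lift A M P]
  let π₀ : ↥(P.complex.X 0) →ₗ[R] A := (P.π.f 0).hom
  have hπ₀ : Function.Surjective π₀ := by
    have : Epi (P.π.f 0) := inferInstance
    exact (ModuleCat.epi_iff_surjective (P.π.f 0)).mp this
  let d10 : ↥(P.complex.X 1) →ₗ[R] ↥(P.complex.X 0) := (P.complex.d 1 0).hom
  let d21 : ↥(P.complex.X 2) →ₗ[R] ↥(P.complex.X 1) := (P.complex.d 2 1).hom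
  have hproj : Module.Projective R ↥(P.complex.X 0) := by
    rw [IsProjective.iff_projective]
    exact (inferInstance : Projective (P.complex.X 0))
  have hex0 := (ShortComplex.moduleCat_exact_iff _).mp P.exact₀
  have hex1 := (ShortComplex.moduleCat_exact_iff _).mp (P.exact_succ 0)
  have h1 : ∀ x : ↥(P.complex.X 0), π₀ x = 0 ↔ x ∈ LinearMap.range d10 := by
    intro x
    constructor
    · intro hx
      obtain ⟨y, hy⟩ := hex0 x hx
      exact ⟨y, hy⟩
    · rintro ⟨y, rfl⟩
      exact congrArg (fun f => ModuleCat.Hom.hom f y) P.complex_d_comp_π_f_zero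
  have h2 : ∀ y : ↥(P.complex.X 1), d10 y = 0 ↔ y ∈ LinearMap.range d21 := by
    intro y
    constructor
    · intro hy
      obtain ⟨z, hz⟩ := hex1 y hy
      exact ⟨z, hz⟩
    · rintro ⟨z, rfl⟩
      exact congrArg (fun f => ModuleCat.Hom.hom f z) (P.complex.d_comp_d 2 1 0)
  have := transfer_iff (M := M) π hπ π₀ hπ₀ d10 d21 h1 h2
  rw [← this]
  constructor
  · intro h φ hφ
    obtain ⟨ψ, hψ⟩ := h (ModuleCat.ofHom φ) (by ext x; exact LinearMap.congr_fun hφ x)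
    exact ⟨ψ.hom, by ext x; exact congrArg (fun f => ModuleCat.Hom.hom f x) hψ⟩
  · intro h φ hφ
    obtain ⟨ψ, hψ⟩ := h φ.hom (by ext x; exact congrArg (fun f => ModuleCat.Hom.hom f x) hφ)
    exact ⟨ModuleCat.ofHom ψ, by ext x; exact LinearMap.congr_fun hψ x⟩

lemma Ideal.IsInQ.mul {I J : Ideal R} (hI : I.IsInQ) (hJ : J.IsInQ) : (I * J).IsInQ := by
  obtain ⟨hIfg, I', hI'le, hI'fg, hI'd⟩ := hI
  obtain ⟨hJfg, J', hJ'le, hJ'fg, hJ'd⟩ := hJ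
  refine ⟨Submodule.FG.mul hIfg hJfg, I' * J', Ideal.mul_mono hI'le hJ'le, Submodule.FG.mul hI'fg hJ'fg, ?_⟩
  intro r hr
  refine hJ'd r fun b hb => hI'd (b * r) fun a ha => ?_
  rw [← mul_assoc]
  exact hr (a * b) (Ideal.mul_mem_mul ha hb)

lemma ext1_quotient_iff (I : Ideal R) (M : Type u) [AddCommGroup M] [Module R M] :
    Ext1Vanishes R (R ⧸ I) M ↔ ∀ θ : I →ₗ[R] M, ∃ m : M, ∀ a : I, θ a = (a : R) • m := by
  rw [ext1Vanishes_iff_extend (R ⧸ I) M R I.mkQ (Submodule.mkQ_surjective I)]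
  have hker : LinearMap.ker I.mkQ = I := Submodule.ker_mkQ I
  let e : (LinearMap.ker I.mkQ : Submodule R R) ≃ₗ[R] I := LinearEquiv.ofEq _ _ hker
  have hcoe : ∀ k : (LinearMap.ker I.mkQ : Submodule R R), ((e k : I) : R) = (k : R) := by
    intro k
    simp [e, LinearEquiv.coe_ofEq_apply]
  have hcoe' : ∀ a : I, ((e.symm a : (LinearMap.ker I.mkQ : Submodule R R)) : R) = (a : R) := by
    intro a
    have := hcoe (e.symm a)
    rwa [e.apply_symm_apply] at this
  constructor
  · intro h θ
    obtain ⟨ψ, hψ⟩ := h (θ ∘ₗ (e : (LinearMap.ker I.mkQ : Submodule R R) →ₗ[R] I))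
    refine ⟨ψ 1, fun a => ?_⟩
    have h1 := hψ (e.symm a)
    rw [LinearMap.comp_apply, LinearEquiv.coe_coe, e.apply_symm_apply, hcoe'] at h1
    rw [← h1]
    conv_lhs => rw [show (a : R) = (a : R) • (1 : R) by rw [smul_eq_mul, mul_one]]
    rw [map_smul]
  · intro h φ
    obtain ⟨m, hm⟩ := h (φ ∘ₗ (e.symm : I →ₗ[R] (LinearMap.ker I.mkQ : Submodule R R)))
    refine ⟨LinearMap.toSpanSingleton R M m, fun k => ?_⟩
    have h1 := hm (e k)
    rw [LinearMap.comp_apply, LinearEquiv.coe_coe, e.symm_apply_apply, hcoe] at h1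
    rw [LinearMap.toSpanSingleton_apply, ← h1]

lemma torsion_extend {M : Type u} [AddCommGroup M] [Module R M]
    (hM : IsQTorsionFree R M)
    (hL : ∀ I : Ideal R, I.IsInQ → ∀ θ : I →ₗ[R] M, ∃ m : M, ∀ a : I, θ a = (a : R) • m)
    {T F : Type u} [AddCommGroup T] [Module R T] [AddCommGroup F] [Module R F]
    (hT : IsQTorsion R T) (π : F →ₗ[R] T)
    (φ : (LinearMap.ker π) →ₗ[R] M) :
    ∃ ψ : F →ₗ[R] M, ∀ k : LinearMap.ker π, ψ k = φ k := by
  classical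
  set N : Submodule R (M × F) := LinearMap.range (LinearMap.prod φ (-((LinearMap.ker π).subtype))) with hN
  set i : M →ₗ[R] ((M × F) ⧸ N) := N.mkQ ∘ₗ LinearMap.inl R M F with hi
  set j : F →ₗ[R] ((M × F) ⧸ N) := N.mkQ ∘ₗ LinearMap.inr R M F with hj
  have hNle : N ≤ LinearMap.ker (π ∘ₗ LinearMap.snd R M F) := by
    rintro v ⟨k, rfl⟩
    simp [LinearMap.mem_ker, LinearMap.mem_ker.mp k.2]
  set p : ((M × F) ⧸ N) →ₗ[R] T := Submodule.liftQ N (π ∘ₗ LinearMap.snd R M F) hNle with hp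
  have hinj : Function.Injective i := by
    intro m₁ m₂ h
    have h0 : i (m₁ - m₂) = 0 := by rw [map_sub, h, sub_self]
    have hmem : ((m₁ - m₂, 0) : M × F) ∈ N := by
      rw [hi, LinearMap.comp_apply] at h0
      exact (Submodule.Quotient.mk_eq_zero _).mp h0
    obtain ⟨k, hk⟩ := hmem
    have hk2 : -(k : F) = (0 : F) := congrArg Prod.snd hk
    have hk0 : k = 0 := by
      apply Subtype.ext
      simpa using hk2
    have hk1 : φ k = m₁ - m₂ := congrArg Prod.fst hk
    rw [hk0, map_zero] at hk1
    rw [← sub_eq_zero, ← hk1]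
  have hji : ∀ k : LinearMap.ker π, j (k : F) = i (φ k) := by
    intro k
    rw [← sub_eq_zero]
    have hmem : ((φ k, -(k : F)) : M × F) ∈ N := ⟨k, rfl⟩
    have hmem2 : ((-(φ k), (k : F)) : M × F) ∈ N := by
      have := N.neg_mem hmem
      simpa using this
    have : j (k : F) - i (φ k) = N.mkQ ((-(φ k), (k : F)) : M × F) := by
      rw [hi, hj, LinearMap.comp_apply, LinearMap.comp_apply, ← map_sub]
      congr 1
      ext <;> simp
    rw [this, Submodule.mkQ_apply, Submodule.Quotient.mk_eq_zero]
    exact hmem2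
  have hker_p : ∀ e : (M × F) ⧸ N, p e = 0 → ∃ m : M, i m = e := by
    intro e he
    obtain ⟨⟨m, x⟩, rfl⟩ := Submodule.mkQ_surjective N e
    have hx : x ∈ LinearMap.ker π := by
      have hpe : p (N.mkQ (m, x)) = π x := by
        rw [hp, Submodule.mkQ_apply, Submodule.liftQ_apply]
        rfl
      rw [hpe] at he
      exact LinearMap.mem_ker.mpr he
    refine ⟨m + φ ⟨x, hx⟩, ?_⟩
    rw [← sub_eq_zero]
    have : i (m + φ ⟨x, hx⟩) - N.mkQ (m, x) = N.mkQ ((φ ⟨x, hx⟩, -x) : M × F) := by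
      rw [hi, LinearMap.comp_apply, ← map_sub]
      congr 1
      ext <;> simp
    rw [this, Submodule.mkQ_apply, Submodule.Quotient.mk_eq_zero]
    exact ⟨⟨x, hx⟩, rfl⟩
  have exists_good : ∀ e : (M × F) ⧸ N,
      ∃ m : M, ∃ I : Ideal R, I.IsInQ ∧ ∀ a ∈ I, a • e = a • (i m) := by
    intro e
    obtain ⟨I, hI, hann⟩ := hT (p e)
    have hmem : ∀ a : I, LinearMap.smulRight (I.subtype) e a ∈ LinearMap.range i := by
      intro a
      have hz : p ((a : R) • e) = 0 := by rw [map_smul]; exact hann (a : R) a.2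
      obtain ⟨m, hm⟩ := hker_p _ hz
      exact ⟨m, by simpa [LinearMap.smulRight_apply] using hm⟩
    set θ : I →ₗ[R] M := ((LinearEquiv.ofInjective i hinj).symm :
        (LinearMap.range i) →ₗ[R] M) ∘ₗ
      LinearMap.codRestrict (LinearMap.range i) (LinearMap.smulRight I.subtype e) hmem with hθ
    have hθa : ∀ a : I, i (θ a) = (a : R) • e := by
      intro a
      have h5 : (LinearEquiv.ofInjective i hinj) (θ a)
          = LinearMap.codRestrict (LinearMap.range i) (LinearMap.smulRight I.subtype e) hmem a := by
        rw [hθ, LinearMap.comp_apply, LinearEquiv.coe_coe, LinearEquiv.apply_symm_apply]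
      have h6 := congrArg (Subtype.val) h5
      rw [LinearEquiv.ofInjective_apply] at h6
      simpa using h6
    obtain ⟨m, hm⟩ := hL I hI θ
    refine ⟨m, I, hI, fun a ha => ?_⟩
    have h7 := hθa ⟨a, ha⟩
    rw [hm ⟨a, ha⟩] at h7
    rw [← h7, map_smul]
  have good_unique : ∀ (e : (M × F) ⧸ N) (m₁ m₂ : M),
      (∃ I : Ideal R, I.IsInQ ∧ ∀ a ∈ I, a • e = a • i m₁) →
      (∃ I : Ideal R, I.IsInQ ∧ ∀ a ∈ I, a • e = a • i m₂) → m₁ = m₂ := by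
    rintro e m₁ m₂ ⟨I₁, hI₁, f₁⟩ ⟨I₂, hI₂, f₂⟩
    rw [← sub_eq_zero]
    refine hM _ ⟨I₁ * I₂, hI₁.mul hI₂, fun a ha => ?_⟩
    have ha1 : a ∈ I₁ := Ideal.mul_le_left ha
    have ha2 : a ∈ I₂ := Ideal.mul_le_right ha
    have hz : i (a • (m₁ - m₂)) = 0 := by
      rw [map_smul, map_sub, smul_sub, ← f₁ a ha1, ← f₂ a ha2, sub_self]
    have := hinj (by rw [hz, map_zero] : i (a • (m₁ - m₂)) = i 0)
    exact this
  have exg : ∀ x : F, ∃ m : M, ∃ I : Ideal R, I.IsInQ ∧ ∀ a ∈ I, a • (j x) = a • i m :=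
    fun x => exists_good (j x)
  choose g hg using exg
  have hadd : ∀ x y : F, g (x + y) = g x + g y := by
    intro x y
    refine good_unique (j (x + y)) _ _ (hg (x + y)) ?_
    obtain ⟨I₁, hI₁, f₁⟩ := hg x
    obtain ⟨I₂, hI₂, f₂⟩ := hg y
    refine ⟨I₁ * I₂, hI₁.mul hI₂, fun a ha => ?_⟩
    rw [map_add, smul_add, f₁ a (Ideal.mul_le_left ha), f₂ a (Ideal.mul_le_right ha),
      map_add, smul_add]
  have hsmul : ∀ (r : R) (x : F), g (r • x) = r • g x := by
    intro r x
    refine good_unique (j (r • x)) _ _ (hg (r • x)) ?_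
    obtain ⟨I₁, hI₁, f₁⟩ := hg x
    refine ⟨I₁, hI₁, fun a ha => ?_⟩
    rw [map_smul, smul_comm a r, f₁ a ha, smul_comm, map_smul]
  refine ⟨{ toFun := g, map_add' := hadd, map_smul' := hsmul }, ?_⟩
  intro k
  obtain ⟨I0, hI0, -⟩ := hT 0
  exact good_unique (j (k : F)) _ _ (hg (k : F))
    ⟨I0, hI0, fun a ha => by rw [hji k]⟩

theorem lucas_iff_ext_vanishes_on_torsion' (M : Type u) [AddCommGroup M] [Module R M]
    (hM : IsQTorsionFree R M) :
    IsLucasModule R M ↔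
      ∀ (T : Type u) [AddCommGroup T] [Module R T], IsQTorsion R T → Ext1Vanishes R T M := by
  constructor
  · rintro ⟨-, hExt⟩ T _ _ hT
    rw [ext1Vanishes_iff_extend T M (T →₀ R) (Finsupp.linearCombination R id)
      (Finsupp.linearCombination_id_surjective R T)]
    intro φ
    exact torsion_extend hM (fun I hI => (ext1_quotient_iff I M).mp (hExt I hI)) hT _ φ
  · intro h
    refine ⟨hM, fun I hI => h (R ⧸ I) ?_⟩
    intro x
    obtain ⟨r, rfl⟩ := Submodule.Quotient.mk_surjective I x
    refine ⟨I, hI, fun a ha => ?_⟩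
    rw [← Submodule.Quotient.mk_smul, Submodule.Quotient.mk_eq_zero]
    rw [smul_eq_mul]
    exact Ideal.mul_mem_right r I ha

end Aux

/-- A `𝒬`-torsion-free `R`-module `M` is a Lucas module iff
`Ext¹_R(T, M) = 0` for every `𝒬`-torsion `R`-module `T`. -/
theorem lucas_iff_ext_vanishes_on_torsion (R : Type u) [CommRing R]
    (M : Type u) [AddCommGroup M] [Module R M] (hM : IsQTorsionFree R M) :
    IsLucasModule R M ↔
      ∀ (T : Type u) [AddCommGroup T] [Module R T], IsQTorsion R T → Ext1Vanishes R T M := by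
  exact lucas_iff_ext_vanishes_on_torsion' (R := R) M hM
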